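/- Let U₀ ∈ B(H₀) and U₁ ∈ B(H₁) be unitary operators, and set S₀ := U₀T₀U₀* and S₁ := U₁T₁U₁*. Assume that the only operator W ∈ B(H₁,H₀) with T₀W = WT₁ is W = 0. Then the block diagonal unitary U₀ ⊕ U₁ on H₀ ⊕ H₁ satisfies (U₀ ⊕ U₁) T (U₀ ⊕ U₁)* = [[S₀, XS₁ − S₀X],[0,S₁]] if and only if U₀∘X = X∘U₁. -/

import Mathlib

open ContinuousLinearMap

noncomputable def blockOp {H₀ H₁ K₀ K₁ : Type*}
    [NormedAddCommGroup H₀] [InnerProductSpace ℂ H₀]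
    [NormedAddCommGroup H₁] [InnerProductSpace ℂ H₁]
    [NormedAddCommGroup K₀] [InnerProductSpace ℂ K₀]
    [NormedAddCommGroup K₁] [InnerProductSpace ℂ K₁]
    (A : H₀ →L[ℂ] K₀) (B : H₁ →L[ℂ] K₀) (C : H₀ →L[ℂ] K₁) (D : H₁ →L[ℂ] K₁) :
    WithLp 2 (H₀ × H₁) →L[ℂ] WithLp 2 (K₀ × K₁) :=
  (((WithLp.prodContinuousLinearEquiv 2 ℂ K₀ K₁).symm : (K₀ × K₁) →L[ℂ] WithLp 2 (K₀ × K₁)) ∘L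
    ((A.coprod B).prod (C.coprod D))) ∘L
    ((WithLp.prodContinuousLinearEquiv 2 ℂ H₀ H₁ : WithLp 2 (H₀ × H₁) →L[ℂ] (H₀ × H₁)))

section Aux
set_option linter.unusedSectionVars false
variable {H₀ H₁ K₀ K₁ L₀ L₁ : Type*}
    [NormedAddCommGroup H₀] [InnerProductSpace ℂ H₀] [CompleteSpace H₀]
    [NormedAddCommGroup H₁] [InnerProductSpace ℂ H₁] [CompleteSpace H₁]
    [NormedAddCommGroup K₀] [InnerProductSpace ℂ K₀] [CompleteSpace K₀]
    [NormedAddCommGroup K₁] [InnerProductSpace ℂ K₁] [CompleteSpace K₁]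
    [NormedAddCommGroup L₀] [InnerProductSpace ℂ L₀] [CompleteSpace L₀]
    [NormedAddCommGroup L₁] [InnerProductSpace ℂ L₁] [CompleteSpace L₁]

lemma blockOp_apply_fst (A : H₀ →L[ℂ] K₀) (B : H₁ →L[ℂ] K₀) (C : H₀ →L[ℂ] K₁) (D : H₁ →L[ℂ] K₁)
    (x : WithLp 2 (H₀ × H₁)) : (blockOp A B C D x).fst = A x.fst + B x.snd := rfl

lemma blockOp_apply_snd (A : H₀ →L[ℂ] K₀) (B : H₁ →L[ℂ] K₀) (C : H₀ →L[ℂ] K₁) (D : H₁ →L[ℂ] K₁)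
    (x : WithLp 2 (H₀ × H₁)) : (blockOp A B C D x).snd = C x.fst + D x.snd := rfl

lemma adjoint_blockOp (A : H₀ →L[ℂ] K₀) (B : H₁ →L[ℂ] K₀) (C : H₀ →L[ℂ] K₁) (D : H₁ →L[ℂ] K₁) :
    adjoint (blockOp A B C D)
      = blockOp (adjoint A) (adjoint C) (adjoint B) (adjoint D) := by
  symm
  rw [eq_adjoint_iff]
  intro x y
  rw [WithLp.prod_inner_apply, WithLp.prod_inner_apply]
  simp only [WithLp.ofLp_fst, WithLp.ofLp_snd]
  rw [blockOp_apply_fst, blockOp_apply_snd,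
    blockOp_apply_fst, blockOp_apply_snd]
  simp only [inner_add_left, inner_add_right, adjoint_inner_left]
  ring

lemma blockOp_comp (A : K₀ →L[ℂ] L₀) (B : K₁ →L[ℂ] L₀) (C : K₀ →L[ℂ] L₁) (D : K₁ →L[ℂ] L₁)
    (A' : H₀ →L[ℂ] K₀) (B' : H₁ →L[ℂ] K₀) (C' : H₀ →L[ℂ] K₁) (D' : H₁ →L[ℂ] K₁) :
    blockOp A B C D ∘L blockOp A' B' C' D'
      = blockOp (A ∘L A' + B ∘L C') (A ∘L B' + B ∘L D')
          (C ∘L A' + D ∘L C') (C ∘L B' + D ∘L D') := by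
  ext x
  refine WithLp.ofLp_injective 2 (Prod.ext ?_ ?_)
  · show (blockOp A B C D (blockOp A' B' C' D' x)).fst =
      (blockOp (A ∘L A' + B ∘L C') (A ∘L B' + B ∘L D')
          (C ∘L A' + D ∘L C') (C ∘L B' + D ∘L D') x).fst
    rw [blockOp_apply_fst, blockOp_apply_fst, blockOp_apply_snd, blockOp_apply_fst]
    simp only [add_apply, comp_apply, map_add]
    abel
  · show (blockOp A B C D (blockOp A' B' C' D' x)).snd =
      (blockOp (A ∘L A' + B ∘L C') (A ∘L B' + B ∘L D')
          (C ∘L A' + D ∘L C') (C ∘L B' + D ∘L D') x).snd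
    rw [blockOp_apply_snd, blockOp_apply_fst, blockOp_apply_snd, blockOp_apply_snd]
    simp only [add_apply, comp_apply, map_add]
    abel

lemma blockOp_inj {A A' : H₀ →L[ℂ] K₀} {B B' : H₁ →L[ℂ] K₀} {C C' : H₀ →L[ℂ] K₁}
    {D D' : H₁ →L[ℂ] K₁} (h : blockOp A B C D = blockOp A' B' C' D') :
    A = A' ∧ B = B' ∧ C = C' ∧ D = D' := by
  refine ⟨?_, ?_, ?_, ?_⟩
  · ext v
    have := congrArg (fun f => (f ((WithLp.prodContinuousLinearEquiv 2 ℂ H₀ H₁).symm (v, 0))).fst) h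
    simpa [blockOp_apply_fst, blockOp_apply_snd] using this
  · ext v
    have := congrArg (fun f => (f ((WithLp.prodContinuousLinearEquiv 2 ℂ H₀ H₁).symm (0, v))).fst) h
    simpa [blockOp_apply_fst, blockOp_apply_snd] using this
  · ext v
    have := congrArg (fun f => (f ((WithLp.prodContinuousLinearEquiv 2 ℂ H₀ H₁).symm (v, 0))).snd) h
    simpa [blockOp_apply_fst, blockOp_apply_snd] using this
  · ext v
    have := congrArg (fun f => (f ((WithLp.prodContinuousLinearEquiv 2 ℂ H₀ H₁).symm (0, v))).snd) h
    simpa [blockOp_apply_fst, blockOp_apply_snd] using this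
end Aux

/-- with `S₀ = U₀T₀U₀*`, `S₁ = U₁T₁U₁*`, and assuming no nonzero `W`
intertwines `T₀` and `T₁`, the diagonal unitary `U₀ ⊕ U₁` conjugates
`[[T₀, XT₁-T₀X],[0,T₁]]` to `[[S₀, XS₁-S₀X],[0,S₁]]` iff `U₀X = XU₁`. -/
theorem stmt12 {H₀ H₁ : Type*}
    [NormedAddCommGroup H₀] [InnerProductSpace ℂ H₀] [CompleteSpace H₀]
    [NormedAddCommGroup H₁] [InnerProductSpace ℂ H₁] [CompleteSpace H₁]
    (T₀ : H₀ →L[ℂ] H₀) (T₁ : H₁ →L[ℂ] H₁) (X : H₁ →L[ℂ] H₀)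
    (U₀ : H₀ →L[ℂ] H₀) (U₁ : H₁ →L[ℂ] H₁)
    (hU₀ : adjoint U₀ ∘L U₀ = 1 ∧ U₀ ∘L adjoint U₀ = 1)
    (hU₁ : adjoint U₁ ∘L U₁ = 1 ∧ U₁ ∘L adjoint U₁ = 1)
    (S₀ : H₀ →L[ℂ] H₀) (hS₀ : S₀ = U₀ ∘L T₀ ∘L adjoint U₀)
    (S₁ : H₁ →L[ℂ] H₁) (hS₁ : S₁ = U₁ ∘L T₁ ∘L adjoint U₁)
    (hW : ∀ W : H₁ →L[ℂ] H₀, T₀ ∘L W = W ∘L T₁ → W = 0) :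
    (blockOp U₀ 0 0 U₁ ∘L blockOp T₀ (X ∘L T₁ - T₀ ∘L X) 0 T₁ ∘L adjoint (blockOp U₀ 0 0 U₁)
        = blockOp S₀ (X ∘L S₁ - S₀ ∘L X) 0 S₁)
      ↔ U₀ ∘L X = X ∘L U₁ := by
  -- pointwise versions of the unitarity assumptions
  have hU₀l : ∀ v, adjoint U₀ (U₀ v) = v := fun v => by
    have := congrFun (congrArg (DFunLike.coe) hU₀.1) v; simpa using this
  have hU₀r : ∀ v, U₀ (adjoint U₀ v) = v := fun v => by
    have := congrFun (congrArg (DFunLike.coe) hU₀.2) v; simpa using this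
  have hU₁l : ∀ v, adjoint U₁ (U₁ v) = v := fun v => by
    have := congrFun (congrArg (DFunLike.coe) hU₁.1) v; simpa using this
  have hU₁r : ∀ v, U₁ (adjoint U₁ v) = v := fun v => by
    have := congrFun (congrArg (DFunLike.coe) hU₁.2) v; simpa using this
  have hA0 : adjoint (0 : H₀ →L[ℂ] H₁) = 0 := by
    simp
  have hcomp : blockOp U₀ 0 0 U₁ ∘L blockOp T₀ (X ∘L T₁ - T₀ ∘L X) 0 T₁
        ∘L adjoint (blockOp U₀ 0 0 U₁)
      = blockOp (U₀ ∘L (T₀ ∘L adjoint U₀)) (U₀ ∘L ((X ∘L T₁ - T₀ ∘L X) ∘L adjoint U₁))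
          0 (U₁ ∘L (T₁ ∘L adjoint U₁)) := by
    rw [adjoint_blockOp, hA0, blockOp_comp, blockOp_comp]
    simp
  rw [hcomp]
  constructor
  · intro h
    obtain ⟨h0, h1, -, -⟩ := blockOp_inj h
    -- pointwise version of the top-right entry equation
    have h1' : ∀ v, U₀ ((X ∘L T₁ - T₀ ∘L X) (adjoint U₁ v)) = X (S₁ v) - S₀ (X v) := by
      intro v
      have := congrFun (congrArg (DFunLike.coe) h1) v
      simpa using this
    set W : H₁ →L[ℂ] H₀ := X - adjoint U₀ ∘L X ∘L U₁ with hWdef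
    have hWzero : W = 0 := by
      apply hW
      ext v
      have hv := h1' (U₁ v)
      rw [hU₁l] at hv
      rw [hWdef]
      simp only [sub_apply, comp_apply, map_sub] at hv ⊢
      have hS₁v : S₁ (U₁ v) = U₁ (T₁ v) := by rw [hS₁]; simp [hU₁l]
      rw [hS₁v, hS₀] at hv
      -- apply adjoint U₀ to both sides of hv
      have hv2 := congrArg (adjoint U₀) hv
      simp only [map_sub, hU₀l, comp_apply] at hv2
      -- hv2 : X (T₁ v) - T₀ (X v) = adjoint U₀ (X (U₁ (T₁ v))) - T₀ (adjoint U₀ (X (U₁ v)))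
      have : T₀ (X v) - T₀ (adjoint U₀ (X (U₁ v)))
          = X (T₁ v) - adjoint U₀ (X (U₁ (T₁ v))) := by
        have := hv2
        abel_nf at this ⊢
        linear_combination (norm := abel_nf) -this
      simpa using this
    have hX : X = adjoint U₀ ∘L X ∘L U₁ := by
      have := sub_eq_zero.mp hWzero
      simpa using this
    ext v
    simp only [comp_apply]
    conv_lhs => rw [hX]
    simp [hU₀r]
  · intro hc
    have hc' : ∀ v, U₀ (X v) = X (U₁ v) := fun v => by
      have := congrFun (congrArg (DFunLike.coe) hc) v; simpa using this
    congr 1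
    · rw [hS₀]
    · ext v
      simp only [comp_apply, sub_apply, map_sub]
      have e1 : U₀ (X (T₁ (adjoint U₁ v))) = X (S₁ v) := by
        rw [hc', hS₁]; simp
      have e2 : U₀ (T₀ (X (adjoint U₁ v))) = S₀ (X v) := by
        have : X (adjoint U₁ v) = adjoint U₀ (X v) := by
          have := hc' (adjoint U₁ v)
          rw [hU₁r] at this
          rw [← this, hU₀l]
        rw [this, hS₀]; simp
      rw [e1, e2]
    · rw [hS₁]
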